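/- Assume α, β > 0 and that β²μ_j − 4α² ≠ 0 for all j ∈ {1,…,N−1}, where μ_j = 2 − 2cos(2πj/N). Then the roots λ_{j,k} = (−βμ_j + (−1)^k √(β²μ_j² − 4α²μ_j))/2 of z² + βμ_j z + α²μ_j satisfy: λ_{j,1} ≠ λ_{j,2} for all j ∈ {1,…,N−1}, and λ_{j,k} ≠ λ_{l,m} whenever j ≠ l are in {1,…,⌊N/2⌋}. Moreover, 0 ∉ {λ_{j,k} : j ∈ {1,…,N−1}, k ∈ {1,2}}. -/
import Mathlib

lemma aux_sq (x : ℝ) (hx : x ≠ 0) : (((x:ℝ):ℂ) ^ ((1:ℂ)/2)) ^ 2 = (x:ℂ) := by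
  have hx' : (x:ℂ) ≠ 0 := Complex.ofReal_ne_zero.mpr hx
  rw [sq, ← Complex.cpow_add _ _ hx']
  norm_num

theorem eigenvalues_distinct (N : ℕ) (hN : 3 ≤ N)
    (α β : ℝ) (hα : 0 < α) (hβ : 0 < β)
    (μ : ℕ → ℝ) (hμ : ∀ j, μ j = 2 - 2 * Real.cos (2 * Real.pi * j / N))
    (hcond : ∀ j ∈ Finset.Icc 1 (N - 1), β ^ 2 * μ j - 4 * α ^ 2 ≠ 0)
    (lam : ℕ → ℕ → ℂ)
    (hlam : ∀ j k, lam j k =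
      (-(β * μ j : ℝ) + (-1 : ℂ) ^ k *
        ((β ^ 2 * (μ j) ^ 2 - 4 * α ^ 2 * μ j : ℝ) : ℂ) ^ ((1 : ℂ) / 2)) / 2) :
    (∀ j ∈ Finset.Icc 1 (N - 1), lam j 1 ≠ lam j 2) ∧
    (∀ j ∈ Finset.Icc 1 (N / 2), ∀ l ∈ Finset.Icc 1 (N / 2), j ≠ l →
      ∀ k ∈ ({1, 2} : Finset ℕ), ∀ m ∈ ({1, 2} : Finset ℕ), lam j k ≠ lam l m) ∧
    (∀ j ∈ Finset.Icc 1 (N - 1), ∀ k ∈ ({1, 2} : Finset ℕ), lam j k ≠ 0) := by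
  have hNR : (0:ℝ) < N := by
    have : (3:ℝ) ≤ N := by exact_mod_cast hN
    linarith
  have hπ := Real.pi_pos
  -- positivity of μ on [1, N-1]
  have hμpos : ∀ j ∈ Finset.Icc 1 (N - 1), 0 < μ j := by
    intro j hj
    rw [Finset.mem_Icc] at hj
    have h1 : (1:ℝ) ≤ j := by exact_mod_cast hj.1
    have h2 : (j:ℝ) < N := by
      have : j < N := by omega
      exact_mod_cast this
    have hθpos : 0 < 2 * Real.pi * j / N :=
      div_pos (by nlinarith) hNR
    have hθlt : 2 * Real.pi * j / N < 2 * Real.pi := by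
      rw [div_lt_iff₀ hNR]
      nlinarith
    have hcos : Real.cos (2 * Real.pi * j / N) < 1 := by
      rcases (Real.cos_le_one (2 * Real.pi * j / N)).lt_or_eq with h | h
      · exact h
      · exfalso
        have := (Real.cos_eq_one_iff_of_lt_of_lt (by linarith) hθlt).mp h
        linarith
    rw [hμ]; linarith
  -- nonvanishing of the discriminant
  have hxne : ∀ j ∈ Finset.Icc 1 (N - 1), β ^ 2 * (μ j) ^ 2 - 4 * α ^ 2 * μ j ≠ 0 := by
    intro j hj
    have h1 := hμpos j hj
    have h2 := hcond j hj
    have he : β ^ 2 * (μ j) ^ 2 - 4 * α ^ 2 * μ j = μ j * (β ^ 2 * μ j - 4 * α ^ 2) := by ring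
    rw [he]
    exact mul_ne_zero (ne_of_gt h1) h2
  -- each lam j k satisfies the quadratic
  have hquad : ∀ j ∈ Finset.Icc 1 (N - 1), ∀ k : ℕ,
      (lam j k) ^ 2 + (β:ℂ) * (μ j : ℝ) * lam j k + (α:ℂ) ^ 2 * (μ j : ℝ) = 0 := by
    intro j hj k
    have hs2 := aux_sq _ (hxne j hj)
    rw [hlam]
    set s : ℂ := ((β ^ 2 * (μ j) ^ 2 - 4 * α ^ 2 * μ j : ℝ) : ℂ) ^ ((1 : ℂ) / 2) with hsdef
    have hes : ((-1:ℂ) ^ k * s) ^ 2 = ((β ^ 2 * (μ j) ^ 2 - 4 * α ^ 2 * μ j : ℝ) : ℂ) := by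
      rw [mul_pow, ← pow_mul, mul_comm k 2, pow_mul]
      norm_num [hs2]
    push_cast at hes ⊢
    linear_combination (1/4 : ℂ) * hes
  -- injectivity of μ on [1, N/2]
  have hμinj : ∀ j ∈ Finset.Icc 1 (N / 2), ∀ l ∈ Finset.Icc 1 (N / 2), μ j = μ l → j = l := by
    intro j hj l hl h
    rw [Finset.mem_Icc] at hj hl
    have hmem : ∀ m : ℕ, 1 ≤ m → m ≤ N / 2 → 2 * Real.pi * m / N ∈ Set.Icc 0 Real.pi := by
      intro m hm1 hm2
      have h2m : 2 * m ≤ N := by omega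
      have h2m' : 2 * (m:ℝ) ≤ N := by exact_mod_cast h2m
      constructor
      · positivity
      · rw [div_le_iff₀ hNR]; nlinarith
    have hcos : Real.cos (2 * Real.pi * j / N) = Real.cos (2 * Real.pi * l / N) := by
      rw [hμ, hμ] at h; linarith
    have heq := Real.injOn_cos (hmem j hj.1 hj.2) (hmem l hl.1 hl.2) hcos
    have h2 : (2 * Real.pi / (N:ℝ)) * j = (2 * Real.pi / (N:ℝ)) * l := by
      linear_combination heq
    have : (j:ℝ) = l :=
      mul_left_cancel₀ (ne_of_gt (by positivity)) h2
    exact_mod_cast this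
  refine ⟨?_, ?_, ?_⟩
  · -- lam j 1 ≠ lam j 2
    intro j hj heq
    have hs2 := aux_sq _ (hxne j hj)
    rw [hlam, hlam] at heq
    set s : ℂ := ((β ^ 2 * (μ j) ^ 2 - 4 * α ^ 2 * μ j : ℝ) : ℂ) ^ ((1 : ℂ) / 2) with hsdef
    have hs0 : s ≠ 0 := by
      intro h
      rw [h] at hs2
      simp only [ne_eq, zero_pow, OfNat.ofNat_ne_zero, not_false_eq_true] at hs2
      exact (hxne j hj) (by exact_mod_cast hs2.symm)
    have h2s : (2:ℂ) * s = 0 := by linear_combination (-2 : ℂ) * heq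
    rcases mul_eq_zero.mp h2s with h | h
    · exact two_ne_zero h
    · exact hs0 h
  · -- distinct across different j, l
    intro j hj l hl hjl k hk m hm heq
    have hjm := Finset.mem_Icc.mp hj
    have hlm := Finset.mem_Icc.mp hl
    have hj' : j ∈ Finset.Icc 1 (N - 1) := Finset.mem_Icc.mpr ⟨hjm.1, by omega⟩
    have hl' : l ∈ Finset.Icc 1 (N - 1) := Finset.mem_Icc.mpr ⟨hlm.1, by omega⟩
    have h1 := hquad j hj' k
    have h2 := hquad l hl' m
    rw [← heq] at h2
    have hμne : ((μ j : ℝ):ℂ) ≠ ((μ l : ℝ):ℂ) := by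
      intro h
      exact hjl (hμinj j hj l hl (by exact_mod_cast h))
    have key : (((μ j : ℝ):ℂ) - ((μ l : ℝ):ℂ)) * ((β:ℂ) * lam j k + (α:ℂ) ^ 2) = 0 := by
      linear_combination h1 - h2
    have hbl : (β:ℂ) * lam j k + (α:ℂ) ^ 2 = 0 := by
      rcases mul_eq_zero.mp key with h | h
      · exact absurd (sub_eq_zero.mp h) hμne
      · exact h
    have hα4 : (α:ℂ) ^ 4 = 0 := by
      linear_combination (β:ℂ) ^ 2 * h1 +
        ((α:ℂ) ^ 2 - (β:ℂ) * lam j k - (β:ℂ) ^ 2 * ((μ j : ℝ):ℂ)) * hbl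
    exact pow_ne_zero 4 (Complex.ofReal_ne_zero.mpr (ne_of_gt hα)) hα4
  · -- nonzero
    intro j hj k hk h0
    have hq := hquad j hj k
    rw [h0] at hq
    simp only [ne_eq, OfNat.ofNat_ne_zero, not_false_eq_true, zero_pow, mul_zero, zero_add,
      add_zero] at hq
    have h1 : α ^ 2 * μ j = 0 := by exact_mod_cast hq
    have h2 := mul_pos (pow_pos hα 2) (hμpos j hj)
    linarith
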